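/- For every n ≥ 0, μ^{(1)}_n = q^n · σ(μ^{(1)}_n) in K (i.e., μ^{(1)}_n(q) = q^n μ^{(1)}_n(q^{−1})). -/

import Mathlib

/- Let `K` be the fraction field of `ℚ[q,Q]`, where `Q` plays the role of `q^ν`.
`θ1ν` and `θ1ν1` are the series `θ^{(1)}_ν` and `θ^{(1)}_{ν+1}` of Jackson's
`q`-Bessel function `J^{(1)}_ν`, and `μ1 n` are the coefficients of
`θ^{(1)}_{ν+1}/θ^{(1)}_ν`. -/

noncomputable section

abbrev K : Type := FractionRing (MvPolynomial (Fin 2) ℚ)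

def qv : K := algebraMap (MvPolynomial (Fin 2) ℚ) K (MvPolynomial.X 0)

def Qv : K := algebraMap (MvPolynomial (Fin 2) ℚ) K (MvPolynomial.X 1)

/-- The q-Pochhammer symbol `(a;q)_n`. -/
def qPoch (a : K) (n : ℕ) : K := ∏ j ∈ Finset.range n, (1 - a * qv ^ j)

/-- `[ν+k]_q = (1 - Q q^k)/(1-q)`. -/
def brk (k : ℕ) : K := (1 - Qv * qv ^ k) / (1 - qv)

/-- `[ν]_q = (1 - Q)/(1-q)`. -/
def brNu : K := (1 - Qv) / (1 - qv)

/-- `θ^{(1)}_ν(x)`. -/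
def θ1ν : PowerSeries K :=
  PowerSeries.mk fun n =>
    (-1) ^ n * (1 - qv) ^ (2 * n) / (qPoch qv n * qPoch (Qv * qv) n)

/-- `θ^{(1)}_{ν+1}(x)`. -/
def θ1ν1 : PowerSeries K :=
  PowerSeries.mk fun n =>
    (-1) ^ n * (1 - qv) ^ (2 * n) / (qPoch qv n * qPoch (Qv * qv ^ 2) n)

/-- The coefficients `μ^{(1)}_n` of `θ^{(1)}_{ν+1}(x)/θ^{(1)}_ν(x)`. -/
def μ1 (n : ℕ) : K := PowerSeries.coeff n (θ1ν1 * θ1ν⁻¹)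

open PowerSeries

/-! ### Auxiliary nonvanishing lemmas -/

lemma alg_ne_zero {p : MvPolynomial (Fin 2) ℚ} (h : p ≠ 0) :
    algebraMap (MvPolynomial (Fin 2) ℚ) K p ≠ 0 := by
  intro h0
  exact h (IsFractionRing.injective (MvPolynomial (Fin 2) ℚ) K (by rw [h0, map_zero]))

lemma qv_ne : qv ≠ 0 := alg_ne_zero (MvPolynomial.X_ne_zero 0)

lemma Qv_ne : Qv ≠ 0 := alg_ne_zero (MvPolynomial.X_ne_zero 1)

lemma one_sub_ne (i j : ℕ) (h : 0 < i + j) : (1 : K) - Qv ^ i * qv ^ j ≠ 0 := by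
  have e : (1 : K) - Qv ^ i * qv ^ j
      = algebraMap (MvPolynomial (Fin 2) ℚ) K
        (1 - MvPolynomial.X 1 ^ i * MvPolynomial.X 0 ^ j) := by
    simp [qv, Qv, map_sub, map_mul, map_pow]
  rw [e]
  apply alg_ne_zero
  intro h0
  have := congrArg (MvPolynomial.eval (fun _ => (0:ℚ))) h0
  rcases Nat.eq_zero_or_pos i with hi | hi
  · subst hi
    have hj : j ≠ 0 := by omega
    simp [zero_pow hj] at this
  · simp [zero_pow (by omega : i ≠ 0)] at this

lemma one_sub_q_pow_ne (j : ℕ) : (1 : K) - qv ^ (j + 1) ≠ 0 := by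
  simpa using one_sub_ne 0 (j + 1) (by omega)

lemma one_sub_Qq_pow_ne (j : ℕ) : (1 : K) - Qv * qv ^ j ≠ 0 := by
  simpa using one_sub_ne 1 j (by omega)

lemma Pq_ne (n : ℕ) : qPoch qv n ≠ 0 := by
  refine Finset.prod_ne_zero_iff.mpr fun j _ => ?_
  have := one_sub_q_pow_ne j
  rw [pow_succ'] at this
  exact this

lemma P1_ne (n : ℕ) : qPoch (Qv * qv) n ≠ 0 := by
  refine Finset.prod_ne_zero_iff.mpr fun j _ => ?_
  have := one_sub_Qq_pow_ne (j + 1)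
  rw [show Qv * qv ^ (j+1) = Qv * qv * qv ^ j by rw [pow_succ']; ring] at this
  exact this

lemma P2_ne (n : ℕ) : qPoch (Qv * qv ^ 2) n ≠ 0 := by
  refine Finset.prod_ne_zero_iff.mpr fun j _ => ?_
  have := one_sub_Qq_pow_ne (j + 2)
  rw [show Qv * qv ^ (j+2) = Qv * qv ^ 2 * qv ^ j by rw [pow_add]; ring] at this
  exact this

/-! ### Pochhammer recurrences -/

lemma Pq_succ (n : ℕ) : qPoch qv (n + 1) = qPoch qv n * (1 - qv ^ (n + 1)) := by
  rw [qPoch, Finset.prod_range_succ, ← qPoch, pow_succ']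

lemma P1_succ (n : ℕ) :
    qPoch (Qv * qv) (n + 1) = qPoch (Qv * qv) n * (1 - Qv * qv ^ (n + 1)) := by
  rw [qPoch, Finset.prod_range_succ, ← qPoch]
  congr 2
  rw [pow_succ']; ring

lemma poch_key (n : ℕ) :
    (1 - Qv * qv ^ (n + 1)) * qPoch (Qv * qv) n
      = (1 - Qv * qv) * qPoch (Qv * qv ^ 2) n := by
  have h2 : qPoch (Qv * qv) (n + 1) = (1 - Qv * qv) * qPoch (Qv * qv ^ 2) n := by
    rw [qPoch, Finset.prod_range_succ']
    have he : ∀ j : ℕ, 1 - Qv * qv * qv ^ (j + 1) = 1 - Qv * qv ^ 2 * qv ^ j := by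
      intro j; rw [pow_succ']; ring
    simp only [he, pow_zero, mul_one]
    rw [mul_comm, qPoch]
  rw [← h2, P1_succ, mul_comm]

/-! ### Coefficient-level functional equations -/

lemma coeff_A (n : ℕ) : coeff n θ1ν
    = (-1) ^ n * (1 - qv) ^ (2 * n) / (qPoch qv n * qPoch (Qv * qv) n) :=
  coeff_mk _ _

lemma coeff_B (n : ℕ) : coeff n θ1ν1
    = (-1) ^ n * (1 - qv) ^ (2 * n) / (qPoch qv n * qPoch (Qv * qv ^ 2) n) :=
  coeff_mk _ _

lemma hr1c (n : ℕ) : coeff n θ1ν1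
    = Qv * qv * (qv ^ n * coeff n θ1ν1) + (1 - Qv * qv) * coeff n θ1ν := by
  have hbB : coeff n θ1ν1 * (1 - Qv * qv ^ (n + 1))
      = coeff n θ1ν * (1 - Qv * qv) := by
    rw [coeff_A, coeff_B, div_mul_eq_mul_div, div_mul_eq_mul_div,
      div_eq_div_iff (mul_ne_zero (Pq_ne n) (P2_ne n)) (mul_ne_zero (Pq_ne n) (P1_ne n))]
    linear_combination ((-1 : K) ^ n * (1 - qv) ^ (2 * n) * qPoch qv n) * poch_key n
  linear_combination hbB

lemma hr3c (n : ℕ) : (1 - Qv * qv) * (qv ^ (n + 1) * coeff (n + 1) θ1ν)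
    = (1 - Qv * qv) * coeff (n + 1) θ1ν + (1 - qv) ^ 2 * coeff n θ1ν1 := by
  have key : (1 - qv) ^ 2 * coeff n θ1ν1
      = (1 - Qv * qv) * (qv ^ (n + 1) - 1) * coeff (n + 1) θ1ν := by
    rw [coeff_A, coeff_B, Pq_succ, P1_succ, ← mul_div_assoc, ← mul_div_assoc,
      div_eq_div_iff (mul_ne_zero (Pq_ne n) (P2_ne n))
        (mul_ne_zero (mul_ne_zero (Pq_ne n) (one_sub_q_pow_ne n))
          (mul_ne_zero (P1_ne n) (one_sub_Qq_pow_ne (n + 1))))]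
    linear_combination ((1 - qv) ^ 2 * ((-1 : K) ^ n * (1 - qv) ^ (2 * n)) * qPoch qv n
      * (1 - qv ^ (n + 1))) * poch_key n
  linear_combination -key

section Sig
variable (σ : K ≃+* K) (hq : σ qv = qv⁻¹) (hQ : σ Qv = Qv⁻¹)
include hq hQ

lemma hs1c (n : ℕ) : σ (PowerSeries.coeff n θ1ν1)
    = Qv * qv * (qv ^ n * σ (PowerSeries.coeff n θ1ν1))
      + (1 - Qv * qv) * (qv ^ n * σ (PowerSeries.coeff n θ1ν)) := by
  have h := congrArg σ (hr1c n)
  simp only [map_add, map_mul, map_sub, map_pow, map_one, hq, hQ, inv_pow] at h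
  field_simp [qv_ne, Qv_ne] at h
  refine mul_left_cancel₀ (mul_ne_zero Qv_ne qv_ne) ?_
  linear_combination -(Qv * qv) * h

lemma hs3c (n : ℕ) : (1 - Qv * qv) * σ (PowerSeries.coeff (n + 1) θ1ν)
    = (1 - Qv * qv) * (qv ^ (n + 1) * σ (PowerSeries.coeff (n + 1) θ1ν))
      - (1 - qv) ^ 2 * Qv * (qv ^ n * σ (PowerSeries.coeff n θ1ν1)) := by
  have h := congrArg σ (hr3c n)
  simp only [map_add, map_mul, map_sub, map_pow, map_one, hq, hQ, inv_pow] at h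
  field_simp [qv_ne, Qv_ne] at h
  refine mul_left_cancel₀ (mul_ne_zero Qv_ne (pow_ne_zero 3 qv_ne)) ?_
  linear_combination -(Qv * qv ^ 2) * h
end Sig

lemma rescale_C' (a c : K) : PowerSeries.rescale a (PowerSeries.C c) = PowerSeries.C c := by
  ext n
  cases n <;> simp [PowerSeries.coeff_rescale, PowerSeries.coeff_C]

lemma R1s : θ1ν1 = PowerSeries.C (Qv * qv) * PowerSeries.rescale qv θ1ν1
    + PowerSeries.C (1 - Qv * qv) * θ1ν := by
  ext n
  simp only [map_add, PowerSeries.coeff_C_mul, PowerSeries.coeff_rescale]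
  exact hr1c n

lemma R3s : PowerSeries.C (1 - Qv * qv) * PowerSeries.rescale qv θ1ν
    = PowerSeries.C (1 - Qv * qv) * θ1ν
      + PowerSeries.C ((1 - qv) ^ 2) * (PowerSeries.X * θ1ν1) := by
  ext n
  simp only [map_add, PowerSeries.coeff_C_mul, PowerSeries.coeff_rescale]
  cases n with
  | zero => simp
  | succ m =>
    rw [PowerSeries.coeff_succ_X_mul]
    exact hr3c m

section Sig2
variable (σ : K ≃+* K) (hq : σ qv = qv⁻¹) (hQ : σ Qv = Qv⁻¹)
include hq hQ

lemma S1s : PowerSeries.map (σ : K →+* K) θ1ν1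
    = PowerSeries.C (Qv * qv) * PowerSeries.rescale qv (PowerSeries.map (σ : K →+* K) θ1ν1)
      + PowerSeries.C (1 - Qv * qv) * PowerSeries.rescale qv (PowerSeries.map (σ : K →+* K) θ1ν) := by
  ext n
  simp only [map_add, PowerSeries.coeff_C_mul, PowerSeries.coeff_rescale, PowerSeries.coeff_map]
  exact hs1c σ hq hQ n

lemma S3s : PowerSeries.C (1 - Qv * qv) * PowerSeries.map (σ : K →+* K) θ1ν
      + PowerSeries.C ((1 - qv) ^ 2 * Qv)
        * (PowerSeries.X * PowerSeries.rescale qv (PowerSeries.map (σ : K →+* K) θ1ν1))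
    = PowerSeries.C (1 - Qv * qv) * PowerSeries.rescale qv (PowerSeries.map (σ : K →+* K) θ1ν) := by
  ext n
  simp only [map_add, PowerSeries.coeff_C_mul, PowerSeries.coeff_rescale, PowerSeries.coeff_map]
  cases n with
  | zero => simp
  | succ m =>
    rw [PowerSeries.coeff_succ_X_mul, PowerSeries.coeff_rescale, PowerSeries.coeff_map]
    simp only [RingEquiv.coe_toRingHom]
    have h := hs3c σ hq hQ m
    linear_combination h
end Sig2

/-- Equation (3.10): `μ^{(1)}_n(q) = q^n μ^{(1)}_n(q⁻¹)`, i.e. `μ^{(1)}_n = q^n σ(μ^{(1)}_n)`,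
where `σ` is the field automorphism of `K` determined by `σ(q) = q⁻¹`, `σ(Q) = Q⁻¹`. -/
theorem mu1_q_inv (σ : K ≃+* K) (hq : σ qv = qv⁻¹) (hQ : σ Qv = Qv⁻¹) :
    ∀ n : ℕ, μ1 n = qv ^ n * σ (μ1 n) := by
  have hpne : (1 : K) - Qv * qv ≠ 0 := by simpa using one_sub_Qq_pow_ne 1
  -- the functional equations
  have hr1 := R1s
  have hr3 := R3s
  have hs1' := congrArg (rescale qv) (S1s σ hq hQ)
  have hs3' := congrArg (rescale qv) (S3s σ hq hQ)
  simp only [map_add, map_mul, map_sub, map_pow, map_one, rescale_C',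
    rescale_X] at hr1 hr3 hs1' hs3'
  set A := θ1ν with hAdef
  set B := θ1ν1 with hBdef
  set τ : K →+* K := (σ : K →+* K) with hτdef
  set A1 := rescale qv A with hA1def
  set B1 := rescale qv B with hB1def
  set sA1 := rescale qv (PowerSeries.map τ A) with hsA1def
  set sB1 := rescale qv (PowerSeries.map τ B) with hsB1def
  set sA2 := rescale qv sA1 with hsA2def
  set sB2 := rescale qv sB1 with hsB2def
  set cq := PowerSeries.C qv with hcqdef
  set cQ := PowerSeries.C Qv with hcQdef
  -- the Casoratian-type identity
  have cert : ((1 - cQ*cq)^2 * (1 + (1-cq)^2 * X)) * (sB1 * A - sA1 * B)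
      = ((1 - cQ*cq)^2 * (1 + (1-cq)^2 * X)) * ((cQ*cq) * (sB2 * A1 - sA2 * B1)) := by
    linear_combination (-((1-cq)^2*X*(1 - cQ*cq)*sB1 + (1 - cQ*cq)^2*sA1)) * hr1
      + ((1 - cQ*cq)^2*sA1 - (1 - cQ*cq)*sB1) * hr3
      + ((1 - cQ*cq)^2*A1 - (1-cq)^2*(cQ*cq)*(1 - cQ*cq)*X*B1) * hs1'
      - ((cQ*cq)*(1 - cQ*cq)*B1 + (1 - cQ*cq)^2*A1) * hs3'
  have hne : ((1 - cQ*cq)^2 * (1 + (1-cq)^2 * X) : PowerSeries K) ≠ 0 := by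
    have hc : PowerSeries.constantCoeff ((1 - cQ*cq)^2 * (1 + (1-cq)^2 * X))
        = (1 - Qv*qv)^2 := by
      simp [hcqdef, hcQdef, map_mul, map_pow, map_sub, map_add, map_one,
        PowerSeries.constantCoeff_X, PowerSeries.constantCoeff_C]
    intro h
    rw [h, map_zero] at hc
    exact (pow_ne_zero 2 hpne) hc.symm
  have hG := mul_left_cancel₀ hne cert
  have hGcoeff : ∀ m : ℕ, PowerSeries.coeff m (sB1 * A - sA1 * B) = 0 := by
    intro m
    have h := congrArg (PowerSeries.coeff m) hG
    rw [show sB2 * A1 - sA2 * B1 = rescale qv (sB1 * A - sA1 * B) by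
      rw [map_sub, map_mul, map_mul]] at h
    simp only [mul_assoc, hcqdef, hcQdef, PowerSeries.coeff_C_mul,
      PowerSeries.coeff_rescale] at h
    have h2 : PowerSeries.coeff m (sB1 * A - sA1 * B) * (1 - Qv * qv ^ (m + 1)) = 0 := by
      linear_combination h
    rcases mul_eq_zero.mp h2 with h3 | h3
    · exact h3
    · exact absurd h3 (one_sub_Qq_pow_ne (m + 1))
  have hD0 : sB1 * A = sA1 * B := by
    have : sB1 * A - sA1 * B = 0 := PowerSeries.ext fun m => by rw [hGcoeff m, map_zero]
    linear_combination this
  -- constant coefficients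
  have hA0 : PowerSeries.constantCoeff A = 1 := by
    rw [hAdef, θ1ν]
    rw [PowerSeries.constantCoeff_mk]
    simp [qPoch]
  have hA0' : PowerSeries.constantCoeff A ≠ 0 := by rw [hA0]; exact one_ne_zero
  have hmA0 : PowerSeries.constantCoeff (PowerSeries.map τ A) ≠ 0 := by
    have hcc : PowerSeries.constantCoeff (PowerSeries.map τ A)
        = τ (PowerSeries.constantCoeff A) := by
      rw [← PowerSeries.coeff_zero_eq_constantCoeff, PowerSeries.coeff_map,
        PowerSeries.coeff_zero_eq_constantCoeff]
    rw [hcc, hA0, map_one]; exact one_ne_zero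
  have hsA10 : PowerSeries.constantCoeff sA1 ≠ 0 := by
    have hcc : PowerSeries.constantCoeff sA1
        = PowerSeries.constantCoeff (PowerSeries.map τ A) := by
      rw [hsA1def, ← PowerSeries.coeff_zero_eq_constantCoeff, PowerSeries.coeff_rescale,
        pow_zero, one_mul, PowerSeries.coeff_zero_eq_constantCoeff]
    rw [hcc]; exact hmA0
  -- inverses
  have hAinv : A * A⁻¹ = 1 := PowerSeries.mul_inv_cancel _ hA0'
  have hmapinv : PowerSeries.map τ A⁻¹ = (PowerSeries.map τ A)⁻¹ := by
    have h1 : PowerSeries.map τ A * PowerSeries.map τ A⁻¹ = 1 := by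
      rw [← map_mul, hAinv, map_one]
    calc PowerSeries.map τ A⁻¹
        = ((PowerSeries.map τ A)⁻¹ * PowerSeries.map τ A) * PowerSeries.map τ A⁻¹ := by
          rw [PowerSeries.inv_mul_cancel _ hmA0, one_mul]
      _ = (PowerSeries.map τ A)⁻¹ := by rw [mul_assoc, h1, mul_one]
  have hresinv : rescale qv ((PowerSeries.map τ A)⁻¹) = sA1⁻¹ := by
    have h1 : sA1 * rescale qv ((PowerSeries.map τ A)⁻¹) = 1 := by
      rw [hsA1def, ← map_mul, PowerSeries.mul_inv_cancel _ hmA0, map_one]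
    calc rescale qv ((PowerSeries.map τ A)⁻¹)
        = (sA1⁻¹ * sA1) * rescale qv ((PowerSeries.map τ A)⁻¹) := by
          rw [PowerSeries.inv_mul_cancel _ hsA10, one_mul]
      _ = sA1⁻¹ := by rw [mul_assoc, h1, mul_one]
  have hsA1inv : sA1 * sA1⁻¹ = 1 := PowerSeries.mul_inv_cancel _ hsA10
  -- the ratio identity
  have hfinal : sB1 * sA1⁻¹ = B * A⁻¹ := by
    calc sB1 * sA1⁻¹ = sB1 * sA1⁻¹ * (A * A⁻¹) := by rw [hAinv, mul_one]
      _ = (sB1 * A) * sA1⁻¹ * A⁻¹ := by ring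
      _ = (sA1 * B) * sA1⁻¹ * A⁻¹ := by rw [hD0]
      _ = (sA1 * sA1⁻¹) * (B * A⁻¹) := by ring
      _ = B * A⁻¹ := by rw [hsA1inv, one_mul]
  intro n
  have e1 : μ1 n = PowerSeries.coeff n (B * A⁻¹) := rfl
  have e2 : B * A⁻¹ = rescale qv (PowerSeries.map τ (B * A⁻¹)) := by
    rw [map_mul (PowerSeries.map τ), map_mul (rescale qv), hmapinv, hresinv, ← hsB1def]
    exact hfinal.symm
  have e3 : PowerSeries.coeff n (B * A⁻¹)
      = qv ^ n * τ (PowerSeries.coeff n (B * A⁻¹)) := by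
    conv_lhs => rw [e2]
    rw [PowerSeries.coeff_rescale, PowerSeries.coeff_map]
  exact e3

end
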